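/- arXiv:2105.10166 — 5 statements merged into one kernel-verified Lean document; each statement's English description precedes it below -/
import Mathlib

section
/- Define δ_m := inf_{y>0} {1 - y^{-m} ∫₀^y x^m b(x,y) dx} for m > 1, where b is a nonnegative measurable function on {0 < x < y} with ∫₀^y x b(x,y) dx = y for all y > 0 and δ₂ > 0. Then the map m ↦ δ_m is non-decreasing on (1, ∞), and δ_m ∈ (0, 1] for all m > 1; in particular 1 - δ_m ≤ (1-δ₂)^{m-1} for m ∈ (1,2) and 1 - δ_m ≤ 1 - δ₂ for m ≥ 2. -/
open Real MeasureTheory Set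

namespace Stmt3Aux

variable {b : ℝ → ℝ → ℝ}

lemma meas_f (hb_meas : Measurable (Function.uncurry b)) (m y : ℝ) :
    Measurable fun x => x ^ m * b x y := by
  have hb : Measurable fun x => b x y :=
    hb_meas.comp (measurable_id.prodMk measurable_const)
  have hx : Measurable fun x : ℝ => x ^ m := by measurability
  exact hx.mul hb

lemma int1 (hb_mass : ∀ y : ℝ, 0 < y → ∫ x in (0:ℝ)..y, x * b x y = y)
    {y : ℝ} (hy : 0 < y) : IntegrableOn (fun x => x * b x y) (Ioo 0 y) volume := by
  have h := hb_mass y hy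
  rw [intervalIntegral.integral_of_le hy.le, integral_Ioc_eq_integral_Ioo] at h
  by_contra hc
  rw [integral_undef hc] at h
  exact hy.ne h

lemma mass_Ioo (hb_mass : ∀ y : ℝ, 0 < y → ∫ x in (0:ℝ)..y, x * b x y = y)
    {y : ℝ} (hy : 0 < y) : ∫ x in Ioo 0 y, x * b x y = y := by
  have h := hb_mass y hy
  rwa [intervalIntegral.integral_of_le hy.le, integral_Ioc_eq_integral_Ioo] at h

lemma intm (hb_meas : Measurable (Function.uncurry b))
    (hb_nonneg : ∀ x y : ℝ, 0 < x → x < y → 0 ≤ b x y)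
    (hb_mass : ∀ y : ℝ, 0 < y → ∫ x in (0:ℝ)..y, x * b x y = y)
    {m y : ℝ} (hm : 1 ≤ m) (hy : 0 < y) :
    IntegrableOn (fun x => x ^ m * b x y) (Ioo 0 y) volume := by
  apply Integrable.mono ((int1 hb_mass hy).const_mul (y ^ (m - 1)))
    (meas_f hb_meas m y).aestronglyMeasurable
  filter_upwards [ae_restrict_mem measurableSet_Ioo] with x hx
  have hb0 : 0 ≤ b x y := hb_nonneg _ _ hx.1 hx.2
  have hx0 : 0 < x := hx.1
  have h1 : x ^ m * b x y ≤ y ^ (m - 1) * (x * b x y) := by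
    have hxm : x ^ m = x ^ (m - 1) * x := by
      rw [← Real.rpow_add_one hx0.ne' (m - 1)]; ring_nf
    rw [hxm]
    have : x ^ (m - 1) ≤ y ^ (m - 1) :=
      Real.rpow_le_rpow hx0.le hx.2.le (by linarith)
    nlinarith [Real.rpow_nonneg hx0.le (m - 1), mul_nonneg hx0.le hb0]
  have h2 : 0 ≤ x ^ m * b x y := mul_nonneg (Real.rpow_nonneg hx0.le m) hb0
  rw [Real.norm_of_nonneg h2, Real.norm_of_nonneg
    (by nlinarith [Real.rpow_nonneg hy.le (m-1), mul_nonneg hx0.le hb0] :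
      (0:ℝ) ≤ y ^ (m-1) * (x * b x y))]
  exact h1

lemma Im_nonneg (hb_nonneg : ∀ x y : ℝ, 0 < x → x < y → 0 ≤ b x y) (m y : ℝ) :
    0 ≤ ∫ x in Ioo 0 y, x ^ m * b x y :=
  setIntegral_nonneg measurableSet_Ioo fun x hx =>
    mul_nonneg (Real.rpow_nonneg hx.1.le m) (hb_nonneg _ _ hx.1 hx.2)

lemma Im_mono (hb_meas : Measurable (Function.uncurry b))
    (hb_nonneg : ∀ x y : ℝ, 0 < x → x < y → 0 ≤ b x y)
    (hb_mass : ∀ y : ℝ, 0 < y → ∫ x in (0:ℝ)..y, x * b x y = y)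
    {m m' y : ℝ} (hm : 1 ≤ m) (hmm : m ≤ m') (hy : 0 < y) :
    ∫ x in Ioo 0 y, x ^ m' * b x y ≤ y ^ (m' - m) * ∫ x in Ioo 0 y, x ^ m * b x y := by
  rw [← integral_const_mul]
  apply setIntegral_mono_on (intm hb_meas hb_nonneg hb_mass (hm.trans hmm) hy)
    ((intm hb_meas hb_nonneg hb_mass hm hy).const_mul _) measurableSet_Ioo
  intro x hx
  have hb0 : 0 ≤ b x y := hb_nonneg _ _ hx.1 hx.2
  have hxm : x ^ m' = x ^ (m' - m) * x ^ m := by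
    rw [← Real.rpow_add hx.1]; ring_nf
  rw [hxm]
  have h1 : x ^ (m' - m) ≤ y ^ (m' - m) :=
    Real.rpow_le_rpow hx.1.le hx.2.le (by linarith)
  have h2 : 0 ≤ x ^ m * b x y := mul_nonneg (Real.rpow_nonneg hx.1.le m) hb0
  calc x ^ (m' - m) * x ^ m * b x y = x ^ (m' - m) * (x ^ m * b x y) := by ring
    _ ≤ y ^ (m' - m) * (x ^ m * b x y) := mul_le_mul_of_nonneg_right h1 h2

lemma Im_le (hb_meas : Measurable (Function.uncurry b))
    (hb_nonneg : ∀ x y : ℝ, 0 < x → x < y → 0 ≤ b x y)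
    (hb_mass : ∀ y : ℝ, 0 < y → ∫ x in (0:ℝ)..y, x * b x y = y)
    {m y : ℝ} (hm : 1 ≤ m) (hy : 0 < y) :
    ∫ x in Ioo 0 y, x ^ m * b x y ≤ y ^ m := by
  have h := Im_mono hb_meas hb_nonneg hb_mass le_rfl hm hy
  have h1 : (∫ x in Ioo 0 y, x ^ (1:ℝ) * b x y) = ∫ x in Ioo 0 y, x * b x y :=
    setIntegral_congr_fun measurableSet_Ioo fun x _ => by rw [Real.rpow_one]
  rw [h1, mass_Ioo hb_mass hy] at h
  calc (∫ x in Ioo 0 y, x ^ m * b x y) ≤ y ^ (m - 1) * y := h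
    _ = y ^ m := by rw [← Real.rpow_add_one hy.ne' (m - 1)]; ring_nf

lemma memLp_rpow {F : ℝ → ℝ} {μ : Measure ℝ}
    (hF : Integrable F μ) (hFnn : 0 ≤ᶠ[ae μ] F) {r : ℝ} (hr : 0 < r) :
    MemLp (fun x => F x ^ r) (ENNReal.ofReal (1/r)) μ := by
  have h1 : MemLp F 1 μ := (memLp_one_iff_integrable).mpr hF
  have h2 := h1.norm_rpow_div (ENNReal.ofReal r)
  rw [ENNReal.toReal_ofReal hr.le] at h2
  have he : (1 : ENNReal) / ENNReal.ofReal r = ENNReal.ofReal (1/r) := by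
    rw [one_div, one_div, ENNReal.ofReal_inv_of_pos hr]
  rw [he] at h2
  apply MemLp.ae_eq _ h2
  filter_upwards [hFnn] with x hx
  rw [Real.norm_of_nonneg hx]

/-- The Hölder interpolation bound. -/
lemma holder (hb_meas : Measurable (Function.uncurry b))
    (hb_nonneg : ∀ x y : ℝ, 0 < x → x < y → 0 ≤ b x y)
    (hb_mass : ∀ y : ℝ, 0 < y → ∫ x in (0:ℝ)..y, x * b x y = y)
    {m y : ℝ} (hm1 : 1 < m) (hm2 : m < 2) (hy : 0 < y) :
    ∫ x in Ioo 0 y, x ^ m * b x y ≤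
      y ^ (2 - m) * (∫ x in Ioo 0 y, x ^ (2:ℝ) * b x y) ^ (m - 1) := by
  set μ := volume.restrict (Ioo (0:ℝ) y) with hμ
  have h2m : (0:ℝ) < 2 - m := by linarith
  have hm1' : (0:ℝ) < m - 1 := by linarith
  set f := fun x => (x * b x y) ^ (2 - m) with hf_def
  set g := fun x => (x ^ (2:ℝ) * b x y) ^ (m - 1) with hg_def
  have hpq : (1/(2-m)).HolderConjugate (1/(m-1)) := by
    constructor
    · rw [one_div, one_div, inv_inv, inv_inv, inv_one]; ring
    · exact one_div_pos.mpr h2m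
    · exact one_div_pos.mpr hm1'
  have hnn1 : 0 ≤ᶠ[ae μ] fun x => x * b x y := by
    filter_upwards [ae_restrict_mem measurableSet_Ioo] with x hx
    exact mul_nonneg hx.1.le (hb_nonneg _ _ hx.1 hx.2)
  have hnn2 : 0 ≤ᶠ[ae μ] fun x => x ^ (2:ℝ) * b x y := by
    filter_upwards [ae_restrict_mem measurableSet_Ioo] with x hx
    exact mul_nonneg (Real.rpow_nonneg hx.1.le _) (hb_nonneg _ _ hx.1 hx.2)
  have hf : MemLp f (ENNReal.ofReal (1/(2-m))) μ :=
    memLp_rpow (int1 hb_mass hy) hnn1 h2m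
  have hg : MemLp g (ENNReal.ofReal (1/(m-1))) μ :=
    memLp_rpow (intm hb_meas hb_nonneg hb_mass (by norm_num) hy) hnn2 hm1'
  have hfnn : 0 ≤ᶠ[ae μ] f := by
    filter_upwards [hnn1] with x hx
    exact Real.rpow_nonneg hx _
  have hgnn : 0 ≤ᶠ[ae μ] g := by
    filter_upwards [hnn2] with x hx
    exact Real.rpow_nonneg hx _
  have H := integral_mul_le_Lp_mul_Lq_of_nonneg hpq hfnn hgnn hf hg
  rw [one_div_one_div, one_div_one_div] at H
  have eA : (∫ a, f a * g a ∂μ) = ∫ x in Ioo 0 y, x ^ m * b x y := by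
    apply setIntegral_congr_fun measurableSet_Ioo
    intro x hx
    have hb0 : 0 ≤ b x y := hb_nonneg _ _ hx.1 hx.2
    have hx0 : (0:ℝ) < x := hx.1
    simp only [hf_def, hg_def]
    rw [Real.mul_rpow hx0.le hb0, Real.mul_rpow (Real.rpow_nonneg hx0.le _) hb0,
      ← Real.rpow_mul hx0.le 2 (m-1)]
    have e3 : x ^ (2-m) * x ^ (2*(m-1)) = x ^ m := by
      rw [← Real.rpow_add hx0]; congr 1; ring
    have e4 : b x y ^ (2-m) * b x y ^ (m-1) = b x y := by
      rw [← Real.rpow_add' hb0 (by norm_num : (2-m)+(m-1) ≠ 0)]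
      norm_num
    calc x^(2-m) * b x y^(2-m) * (x^(2*(m-1)) * b x y^(m-1))
        = (x^(2-m) * x^(2*(m-1))) * (b x y^(2-m) * b x y^(m-1)) := by ring
      _ = x ^ m * b x y := by rw [e3, e4]
  have eB : (∫ a, f a ^ (1/(2-m)) ∂μ) = y := by
    have hcong : (∫ a, f a ^ (1/(2-m)) ∂μ) = ∫ x in Ioo 0 y, x * b x y := by
      apply setIntegral_congr_fun measurableSet_Ioo
      intro x hx
      have hb0 : 0 ≤ b x y := hb_nonneg _ _ hx.1 hx.2
      simp only [hf_def]
      rw [← Real.rpow_mul (mul_nonneg hx.1.le hb0),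
        mul_one_div_cancel h2m.ne', Real.rpow_one]
    rw [hcong, mass_Ioo hb_mass hy]
  have eC : (∫ a, g a ^ (1/(m-1)) ∂μ) = ∫ x in Ioo 0 y, x ^ (2:ℝ) * b x y := by
    apply setIntegral_congr_fun measurableSet_Ioo
    intro x hx
    have hb0 : 0 ≤ b x y := hb_nonneg _ _ hx.1 hx.2
    simp only [hg_def]
    rw [← Real.rpow_mul (mul_nonneg (Real.rpow_nonneg hx.1.le _) hb0),
      mul_one_div_cancel hm1'.ne', Real.rpow_one]
  rw [eA, eB, eC] at H
  exact H

end Stmt3Aux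

open Stmt3Aux

theorem stmt3 (b : ℝ → ℝ → ℝ) (δ : ℝ → ℝ)
    (hb_meas : Measurable (Function.uncurry b))
    (hb_nonneg : ∀ x y : ℝ, 0 < x → x < y → 0 ≤ b x y)
    (hb_mass : ∀ y : ℝ, 0 < y → ∫ x in (0:ℝ)..y, x * b x y = y)
    (hδ : ∀ m : ℝ, δ m = ⨅ y : Ioi (0:ℝ),
        (1 - (∫ x in (0:ℝ)..(y:ℝ), x ^ m * b x (y:ℝ)) / (y:ℝ) ^ m))
    (hδ2 : 0 < δ 2) :
    (∀ m m' : ℝ, 1 < m → m ≤ m' → δ m ≤ δ m') ∧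
    (∀ m : ℝ, 1 < m → 0 < δ m ∧ δ m ≤ 1) ∧
    (∀ m : ℝ, 1 < m → m < 2 → 1 - δ m ≤ (1 - δ 2) ^ (m - 1)) ∧
    (∀ m : ℝ, 2 ≤ m → 1 - δ m ≤ 1 - δ 2) := by
  haveI : Nonempty (Ioi (0:ℝ)) := ⟨⟨1, mem_Ioi.mpr one_pos⟩⟩
  have hδ' : ∀ m : ℝ, δ m = ⨅ y : Ioi (0:ℝ),
      (1 - (∫ x in Ioo (0:ℝ) (y:ℝ), x ^ m * b x (y:ℝ)) / (y:ℝ) ^ m) := by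
    intro m
    rw [hδ m]
    congr 1
    funext y
    rw [intervalIntegral.integral_of_le (le_of_lt y.2), integral_Ioc_eq_integral_Ioo]
  have hF0 : ∀ (m : ℝ) (y : Ioi (0:ℝ)), 1 ≤ m →
      0 ≤ 1 - (∫ x in Ioo (0:ℝ) (y:ℝ), x ^ m * b x (y:ℝ)) / (y:ℝ) ^ m := by
    intro m y hm
    have hy : (0:ℝ) < y := y.2
    have h := Im_le hb_meas hb_nonneg hb_mass hm hy
    have hp : (0:ℝ) < (y:ℝ) ^ m := Real.rpow_pos_of_pos hy m
    have : (∫ x in Ioo (0:ℝ) (y:ℝ), x ^ m * b x (y:ℝ)) / (y:ℝ) ^ m ≤ 1 :=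
      (div_le_one hp).mpr h
    linarith
  have hbdd : ∀ m : ℝ, 1 ≤ m → BddBelow (range fun y : Ioi (0:ℝ) =>
      (1 - (∫ x in Ioo (0:ℝ) (y:ℝ), x ^ m * b x (y:ℝ)) / (y:ℝ) ^ m)) := by
    intro m hm
    refine ⟨0, ?_⟩
    rintro _ ⟨y, rfl⟩
    exact hF0 m y hm
  have hmono : ∀ m m' : ℝ, 1 < m → m ≤ m' → δ m ≤ δ m' := by
    intro m m' hm hmm
    rw [hδ' m, hδ' m']
    apply ciInf_mono (hbdd m hm.le)
    intro y
    have hy : (0:ℝ) < y := y.2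
    have h := Im_mono hb_meas hb_nonneg hb_mass hm.le hmm hy
    have hpm : (0:ℝ) < (y:ℝ) ^ m := Real.rpow_pos_of_pos hy m
    have hpm' : (0:ℝ) < (y:ℝ) ^ m' := Real.rpow_pos_of_pos hy m'
    have key : (∫ x in Ioo (0:ℝ) (y:ℝ), x ^ m' * b x (y:ℝ)) / (y:ℝ) ^ m' ≤
        (∫ x in Ioo (0:ℝ) (y:ℝ), x ^ m * b x (y:ℝ)) / (y:ℝ) ^ m := by
      rw [div_le_div_iff₀ hpm' hpm]
      have hyy : (y:ℝ) ^ (m' - m) * (y:ℝ) ^ m = (y:ℝ) ^ m' := by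
        rw [← Real.rpow_add hy]; congr 1; ring
      calc (∫ x in Ioo (0:ℝ) (y:ℝ), x ^ m' * b x (y:ℝ)) * (y:ℝ) ^ m
          ≤ ((y:ℝ) ^ (m' - m) * ∫ x in Ioo (0:ℝ) (y:ℝ), x ^ m * b x (y:ℝ)) * (y:ℝ) ^ m :=
            mul_le_mul_of_nonneg_right h hpm.le
        _ = (∫ x in Ioo (0:ℝ) (y:ℝ), x ^ m * b x (y:ℝ)) * ((y:ℝ) ^ (m' - m) * (y:ℝ) ^ m) := by
            ring
        _ = (∫ x in Ioo (0:ℝ) (y:ℝ), x ^ m * b x (y:ℝ)) * (y:ℝ) ^ m' := by rw [hyy]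
    linarith
  have hle1 : ∀ m : ℝ, 1 ≤ m → δ m ≤ 1 := by
    intro m hm
    rw [hδ' m]
    apply ciInf_le_of_le (hbdd m hm) ⟨1, mem_Ioi.mpr one_pos⟩
    have h1 : (0:ℝ) ≤ (∫ x in Ioo (0:ℝ) (1:ℝ), x ^ m * b x 1) / (1:ℝ) ^ m :=
      div_nonneg (Im_nonneg hb_nonneg m 1) (Real.rpow_nonneg zero_le_one m)
    show (1:ℝ) - (∫ x in Ioo (0:ℝ) (1:ℝ), x ^ m * b x 1) / (1:ℝ) ^ m ≤ 1
    linarith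
  have hδ2le1 : δ 2 ≤ 1 := hle1 2 one_le_two
  have hkey : ∀ m : ℝ, 1 < m → m < 2 → 1 - (1 - δ 2) ^ (m - 1) ≤ δ m := by
    intro m hm hm2
    rw [hδ' m]
    apply le_ciInf
    intro y
    have hy : (0:ℝ) < y := y.2
    set I2 := ∫ x in Ioo (0:ℝ) (y:ℝ), x ^ (2:ℝ) * b x (y:ℝ) with hI2
    have hI2nn : 0 ≤ I2 := Im_nonneg hb_nonneg 2 y
    have hδ2y : I2 / (y:ℝ) ^ (2:ℝ) ≤ 1 - δ 2 := by
      have h := ciInf_le (hbdd 2 one_le_two) y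
      rw [← hδ' 2] at h
      linarith
    have h2 := holder hb_meas hb_nonneg hb_mass hm hm2 hy
    have hstep1 : (∫ x in Ioo (0:ℝ) (y:ℝ), x ^ m * b x (y:ℝ)) / (y:ℝ) ^ m ≤
        (I2 / (y:ℝ) ^ (2:ℝ)) ^ (m - 1) := by
      rw [div_le_iff₀ (Real.rpow_pos_of_pos hy m)]
      calc (∫ x in Ioo (0:ℝ) (y:ℝ), x ^ m * b x (y:ℝ))
          ≤ (y:ℝ) ^ (2 - m) * I2 ^ (m - 1) := h2
        _ = (I2 / (y:ℝ) ^ (2:ℝ)) ^ (m - 1) * (y:ℝ) ^ m := by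
            rw [Real.div_rpow hI2nn (Real.rpow_nonneg hy.le _),
              ← Real.rpow_mul hy.le 2 (m-1)]
            have e : (y:ℝ) ^ (2 - m) * (y:ℝ) ^ (2*(m-1)) = (y:ℝ) ^ m := by
              rw [← Real.rpow_add hy]; congr 1; ring
            rw [div_mul_eq_mul_div, eq_div_iff (Real.rpow_pos_of_pos hy (2*(m-1))).ne']
            calc (y:ℝ) ^ (2-m) * I2 ^ (m-1) * (y:ℝ) ^ (2*(m-1))
                = I2 ^ (m-1) * ((y:ℝ) ^ (2-m) * (y:ℝ) ^ (2*(m-1))) := by ring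
              _ = I2 ^ (m-1) * (y:ℝ) ^ m := by rw [e]
    have hstep2 : (I2 / (y:ℝ) ^ (2:ℝ)) ^ (m - 1) ≤ (1 - δ 2) ^ (m - 1) :=
      Real.rpow_le_rpow (div_nonneg hI2nn (Real.rpow_nonneg hy.le _)) hδ2y
        (by linarith)
    have := hstep1.trans hstep2
    linarith
  refine ⟨hmono, ?_, ?_, ?_⟩
  · intro m hm
    refine ⟨?_, hle1 m hm.le⟩
    rcases le_or_gt 2 m with h2 | h2
    · exact hδ2.trans_le (hmono 2 m one_lt_two h2)
    · have h := hkey m hm h2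
      have hlt : (1 - δ 2) ^ (m - 1) < 1 :=
        Real.rpow_lt_one (by linarith) (by linarith) (by linarith)
      linarith
  · intro m hm hm2
    have h := hkey m hm hm2
    linarith
  · intro m hm
    have h := hmono 2 m one_lt_two hm
    linarith
end

section
/- Let a* > 0, γ ≥ 0, α = (γ+2)/2, and η = √(a*)/α. Define σ(x) = C x^{-γ/4} e^{-η x^α} for x > 0 with C > 0. Then for every x > 0, -σ''(x) + a* x^γ σ(x) = -C γ(γ+4)/16 · x^{-(γ+8)/4} e^{-η x^α} ≤ 0, i.e. σ is a subsolution of -u'' + a* x^γ u = 0 on (0,∞). -/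
open Real

lemma haux (η α q x : ℝ) (hx : 0 < x) :
    HasDerivAt (fun y : ℝ => y ^ q * Real.exp (-η * y ^ α))
      ((q * x ^ (q - 1) - η * α * x ^ (q + α - 1)) * Real.exp (-η * x ^ α)) x := by
  have h1 : HasDerivAt (fun y : ℝ => y ^ q) (q * x ^ (q - 1)) x :=
    Real.hasDerivAt_rpow_const (Or.inl hx.ne')
  have h2 : HasDerivAt (fun y : ℝ => -η * y ^ α) (-η * (α * x ^ (α - 1))) x :=
    (Real.hasDerivAt_rpow_const (Or.inl hx.ne')).const_mul _
  have h4 := h1.mul h2.exp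
  refine h4.congr_deriv ?_
  have hx1 : x ^ (q + α - 1) = x ^ q * x ^ (α - 1) := by
    rw [show q + α - 1 = q + (α - 1) by ring, Real.rpow_add hx]
  rw [hx1]; ring

theorem stmt4 (astar γ C : ℝ) (ha : 0 < astar) (hγ : 0 ≤ γ) (hC : 0 < C)
    (α η : ℝ) (hα : α = (γ + 2) / 2) (hη : η = Real.sqrt astar / α)
    (σ : ℝ → ℝ) (hσ : σ = fun x => C * x ^ (-γ / 4) * Real.exp (-η * x ^ α)) :
    ∀ x : ℝ, 0 < x →
      -(deriv (deriv σ) x) + astar * x ^ γ * σ x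
        = -(C * γ * (γ + 4) / 16) * x ^ (-(γ + 8) / 4) * Real.exp (-η * x ^ α) ∧
      -(deriv (deriv σ) x) + astar * x ^ γ * σ x ≤ 0 := by
  subst hσ hα
  set s : ℝ := Real.sqrt astar with hs
  have hαpos : (0:ℝ) < (γ + 2) / 2 := by linarith
  have hηα : η * ((γ + 2) / 2) = s := by
    rw [hη]; field_simp
  have hfun : (fun x : ℝ => C * x ^ (-γ / 4) * Real.exp (-η * x ^ ((γ + 2) / 2)))
      = (fun x : ℝ => C * (x ^ (-γ / 4) * Real.exp (-η * x ^ ((γ + 2) / 2)))) := by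
    funext z; ring
  rw [hfun]
  intro x hx
  set p : ℝ := -γ / 4 with hp
  set D1 : ℝ → ℝ := fun y =>
      C * p * (y ^ (p - 1) * Real.exp (-η * y ^ ((γ + 2) / 2)))
      - C * s * (y ^ (p + (γ + 2) / 2 - 1) * Real.exp (-η * y ^ ((γ + 2) / 2))) with hD1def
  have hder1 : ∀ y : ℝ, 0 < y →
      HasDerivAt (fun z : ℝ => C * (z ^ p * Real.exp (-η * z ^ ((γ + 2) / 2)))) (D1 y) y := by
    intro y hy
    have h := (haux η ((γ + 2) / 2) p y hy).const_mul C
    refine h.congr_deriv ?_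
    rw [hD1def]
    simp only []
    rw [← hηα]; ring
  have hev : deriv (fun x : ℝ => C * (x ^ p * Real.exp (-η * x ^ ((γ + 2) / 2)))) =ᶠ[nhds x] D1 := by
    filter_upwards [eventually_gt_nhds hx] with y hy
    exact (hder1 y hy).deriv
  have hD1d : HasDerivAt D1
      (C * p * (((p - 1) * x ^ (p - 1 - 1) - η * ((γ + 2) / 2) * x ^ ((p - 1) + (γ + 2) / 2 - 1)) * Real.exp (-η * x ^ ((γ + 2) / 2)))
       - C * s * (((p + (γ + 2) / 2 - 1) * x ^ ((p + (γ + 2) / 2 - 1) - 1) - η * ((γ + 2) / 2) * x ^ ((p + (γ + 2) / 2 - 1) + (γ + 2) / 2 - 1)) * Real.exp (-η * x ^ ((γ + 2) / 2)))) x :=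
    ((haux η ((γ + 2) / 2) (p - 1) x hx).const_mul (C * p)).sub
      ((haux η ((γ + 2) / 2) (p + (γ + 2) / 2 - 1) x hx).const_mul (C * s))
  have h2d := (hev.deriv_eq).trans hD1d.deriv
  simp only []
  rw [h2d, hηα]
  have e1 : x ^ (p - 1 - 1) = x ^ (-(γ + 8) / 4) := by
    rw [show p - 1 - 1 = -(γ + 8) / 4 by rw [hp]; ring]
  have e2 : x ^ ((p - 1) + (γ + 2) / 2 - 1) = x ^ (p + (γ + 2) / 2 - 1 - 1) := by
    rw [show (p - 1) + (γ + 2) / 2 - 1 = p + (γ + 2) / 2 - 1 - 1 by ring]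
  have e3 : x ^ ((p + (γ + 2) / 2 - 1) + (γ + 2) / 2 - 1) = x ^ γ * x ^ p := by
    rw [show (p + (γ + 2) / 2 - 1) + (γ + 2) / 2 - 1 = γ + p by rw [hp]; ring,
      Real.rpow_add hx]
  rw [e1, e2, e3]
  have hss : s * s = astar := Real.mul_self_sqrt ha.le
  have heq : -(C * p * (((p - 1) * x ^ (-(γ + 8) / 4) - s * x ^ (p + (γ + 2) / 2 - 1 - 1)) * Real.exp (-η * x ^ ((γ + 2) / 2)))
       - C * s * (((p + (γ + 2) / 2 - 1) * x ^ (p + (γ + 2) / 2 - 1 - 1) - s * (x ^ γ * x ^ p)) * Real.exp (-η * x ^ ((γ + 2) / 2))))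
      + astar * x ^ γ * (C * (x ^ p * Real.exp (-η * x ^ ((γ + 2) / 2))))
      = -(C * γ * (γ + 4) / 16) * x ^ (-(γ + 8) / 4) * Real.exp (-η * x ^ ((γ + 2) / 2)) := by
    rw [hp]
    linear_combination (-(C) * (x ^ γ * x ^ (-γ / 4)) * Real.exp (-η * x ^ ((γ + 2) / 2))) * hss
  refine ⟨heq, heq.trans_le ?_⟩
  have hpos : 0 ≤ C * γ * (γ + 4) / 16 * x ^ (-(γ + 8) / 4) * Real.exp (-η * x ^ ((γ + 2) / 2)) := by
    positivity
  linarith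
end

section
/- Let θ ∈ (0,1) and h(z) = θ (1 - ln z)^{-θ-1} z^{-2} on (0,1). Then ∫₀¹ z |ln z| h(z) dz = ∞, i.e. the logarithmic moment of h diverges. -/
open Real Set MeasureTheory

/-- Divergence of `∫ u^(-θ)` on `Ioi 1` when `θ < 1`. -/
lemma aux_rpow_top (θ : ℝ) (hθ : 0 < θ) (hθ' : θ < 1) :
    ∫⁻ u in Ioi (1:ℝ), ENNReal.ofReal (u ^ (-θ)) = ⊤ := by
  by_contra hne
  have hmeas : AEStronglyMeasurable (fun u : ℝ => u ^ (-θ))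
      (volume.restrict (Ioi (1:ℝ))) :=
    (measurable_id.pow measurable_const).aestronglyMeasurable
  have hnn : 0 ≤ᵐ[volume.restrict (Ioi (1:ℝ))] fun u : ℝ => u ^ (-θ) := by
    filter_upwards [ae_restrict_mem measurableSet_Ioi] with u hu
    exact Real.rpow_nonneg (le_of_lt (lt_trans one_pos hu)) _
  have hint : Integrable (fun u : ℝ => u ^ (-θ)) (volume.restrict (Ioi (1:ℝ))) :=
    (lintegral_ofReal_ne_top_iff_integrable hmeas hnn).mp hne
  have := (integrableOn_Ioi_rpow_iff (s := -θ) (t := 1) one_pos).mp hint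
  linarith

theorem stmt7 (θ : ℝ) (hθ : 0 < θ) (hθ' : θ < 1)
    (h : ℝ → ℝ) (hh : ∀ z : ℝ, 0 < z → h z = θ * (1 - Real.log z) ^ (-θ - 1) * z ^ (-2 : ℝ)) :
    ∫⁻ z in Ioo (0:ℝ) 1, ENNReal.ofReal (z * |Real.log z| * h z) = ⊤ := by
  set g : ℝ → ENNReal := fun z => ENNReal.ofReal (z * |Real.log z| * h z) with hg
  set f : ℝ → ℝ := fun u => Real.exp (-u) with hf
  -- change of variables
  have hs : MeasurableSet (Ioi (1:ℝ)) := measurableSet_Ioi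
  have hderiv : ∀ x ∈ Ioi (1:ℝ),
      HasFDerivWithinAt f ((1 : ℝ →L[ℝ] ℝ).smulRight (-Real.exp (-x))) (Ioi 1) x := by
    intro x _
    have : HasDerivAt f (-Real.exp (-x)) x := by
      have := ((Real.hasDerivAt_exp (-x)).comp x (hasDerivAt_neg x))
      simp only [mul_neg, mul_one] at this
      exact this
    exact this.hasDerivWithinAt.hasFDerivWithinAt
  have hinj : InjOn f (Ioi 1) := fun a _ b _ hab =>
    neg_injective (Real.exp_injective hab)
  have himg : f '' Ioi 1 ⊆ Ioo (0:ℝ) 1 := by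
    rintro z ⟨u, hu, rfl⟩
    refine ⟨Real.exp_pos _, ?_⟩
    rw [show (1:ℝ) = Real.exp 0 by simp, Real.exp_lt_exp]
    simp only [mem_Ioi] at hu; linarith
  have key := MeasureTheory.lintegral_image_eq_lintegral_abs_det_fderiv_mul volume hs hderiv hinj g
  have hmono : ∫⁻ z in f '' Ioi 1, g z ≤ ∫⁻ z in Ioo (0:ℝ) 1, g z :=
    lintegral_mono' (Measure.restrict_mono himg le_rfl) le_rfl
  -- the transformed integrand
  have hpt : ∀ u ∈ Ioi (1:ℝ),
      ENNReal.ofReal (θ * 2 ^ (-θ - 1) * u ^ (-θ)) ≤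
        ENNReal.ofReal |((1 : ℝ →L[ℝ] ℝ).smulRight (-Real.exp (-u))).det| * g (f u) := by
    intro u hu
    simp only [mem_Ioi] at hu
    have hu0 : 0 < u := lt_trans one_pos hu
    have hdet : ((1 : ℝ →L[ℝ] ℝ).smulRight (-Real.exp (-u))).det = -Real.exp (-u) :=
      ContinuousLinearMap.det_toSpanSingleton _
    have hfu : g (f u) = ENNReal.ofReal
        (Real.exp (-u) * u * (θ * (1 + u) ^ (-θ - 1) * Real.exp (2 * u))) := by
      have h1 : Real.log (f u) = -u := Real.log_exp _
      have h2 : h (f u) = θ * (1 + u) ^ (-θ - 1) * Real.exp (2 * u) := by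
        rw [hh _ (Real.exp_pos _), h1]
        rw [Real.rpow_def_of_pos (Real.exp_pos _), Real.log_exp]
        ring_nf
      rw [hg]
      simp only [h1, h2, abs_neg, abs_of_pos hu0]
      rfl
    rw [hfu, hdet, abs_neg, abs_of_pos (Real.exp_pos _), ← ENNReal.ofReal_mul
      (le_of_lt (Real.exp_pos _))]
    apply ENNReal.ofReal_le_ofReal
    have hexp : Real.exp (-u) * (Real.exp (-u) * u *
        (θ * (1 + u) ^ (-θ - 1) * Real.exp (2 * u)))
        = θ * u * (1 + u) ^ (-θ - 1) := by
      have : Real.exp (-u) * Real.exp (-u) * Real.exp (2 * u) = 1 := by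
        rw [← Real.exp_add, ← Real.exp_add, show -u + -u + 2*u = 0 by ring, Real.exp_zero]
      calc Real.exp (-u) * (Real.exp (-u) * u * (θ * (1 + u) ^ (-θ - 1) * Real.exp (2 * u)))
          = θ * u * (1 + u) ^ (-θ - 1) *
            (Real.exp (-u) * Real.exp (-u) * Real.exp (2 * u)) := by ring
        _ = θ * u * (1 + u) ^ (-θ - 1) := by rw [this, mul_one]
    rw [hexp]
    -- θ * 2^(-θ-1) * u^(-θ) ≤ θ * u * (1+u)^(-θ-1)
    have h2u : (2 * u) ^ (-θ - 1) ≤ (1 + u) ^ (-θ - 1) :=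
      Real.rpow_le_rpow_of_nonpos (by linarith) (by linarith) (by linarith)
    have hmul : (2 * u) ^ (-θ - 1) = 2 ^ (-θ - 1) * u ^ (-θ - 1) :=
      Real.mul_rpow (by norm_num) (le_of_lt hu0)
    have huu : u * u ^ (-θ - 1) = u ^ (-θ) := by
      nth_rewrite 1 [← Real.rpow_one u]
      rw [← Real.rpow_add hu0]; ring_nf
    calc θ * 2 ^ (-θ - 1) * u ^ (-θ) = θ * (u * (2 * u) ^ (-θ - 1)) := by
          rw [hmul, ← huu]; ring
      _ ≤ θ * (u * (1 + u) ^ (-θ - 1)) := by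
          apply mul_le_mul_of_nonneg_left _ (le_of_lt hθ)
          exact mul_le_mul_of_nonneg_left h2u (le_of_lt hu0)
      _ = θ * u * (1 + u) ^ (-θ - 1) := by ring
  -- assemble
  have hlower : ∫⁻ u in Ioi (1:ℝ), ENNReal.ofReal (θ * 2 ^ (-θ - 1) * u ^ (-θ))
      ≤ ∫⁻ z in Ioo (0:ℝ) 1, g z := by
    refine le_trans ?_ hmono
    rw [key]
    exact setLIntegral_mono' measurableSet_Ioi hpt
  have hdiv : ∫⁻ u in Ioi (1:ℝ), ENNReal.ofReal (θ * 2 ^ (-θ - 1) * u ^ (-θ)) = ⊤ := by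
    have hc : 0 < θ * 2 ^ (-θ - 1) := mul_pos hθ (Real.rpow_pos_of_pos two_pos _)
    calc ∫⁻ u in Ioi (1:ℝ), ENNReal.ofReal (θ * 2 ^ (-θ - 1) * u ^ (-θ))
        = ∫⁻ u in Ioi (1:ℝ), ENNReal.ofReal (θ * 2 ^ (-θ - 1)) * ENNReal.ofReal (u ^ (-θ)) := by
          congr 1; ext u; rw [← ENNReal.ofReal_mul (le_of_lt hc)]
      _ = ENNReal.ofReal (θ * 2 ^ (-θ - 1)) * ∫⁻ u in Ioi (1:ℝ), ENNReal.ofReal (u ^ (-θ)) :=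
          lintegral_const_mul' _ _ ENNReal.ofReal_ne_top
      _ = ⊤ := by
          rw [aux_rpow_top θ hθ hθ', ENNReal.mul_top]
          simpa using hc
  exact top_le_iff.mp (hdiv ▸ hlower)
end

section
/- Let θ ∈ (0,1). Then ∫_z^1 (1 - ln y)^{-θ} y^{-2} dy ∼ z^{-1} (1 - ln z)^{-θ} as z → 0⁺, i.e. the ratio of the two sides tends to 1. -/
open Real Set Filter

namespace Stmt9Aux

noncomputable def g (θ : ℝ) (y : ℝ) : ℝ := (1 - Real.log y) ^ (-θ) * y ^ (-2 : ℝ)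

lemma g_contOn (θ : ℝ) {s : Set ℝ} (hs : s ⊆ Ioc 0 1) : ContinuousOn (g θ) s := by
  have hbase : ∀ x ∈ s, (1 : ℝ) ≤ 1 - Real.log x := by
    intro x hx
    have h := hs hx
    have : Real.log x ≤ 0 := Real.log_nonpos h.1.le h.2
    linarith
  apply ContinuousOn.mul
  · apply ContinuousOn.rpow_const
    · exact continuousOn_const.sub (Real.continuousOn_log.mono fun x hx =>
        (ne_of_gt (hs hx).1))
    · intro x hx
      exact Or.inl (by have := hbase x hx; positivity)
  · apply ContinuousOn.rpow_const continuousOn_id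
    intro x hx
    exact Or.inl (ne_of_gt (hs hx).1)

lemma g_intble (θ : ℝ) {p q : ℝ} (hp : 0 < p) (hpq : p ≤ q) (hq : q ≤ 1) :
    IntervalIntegrable (g θ) MeasureTheory.volume p q := by
  apply ContinuousOn.intervalIntegrable
  rw [uIcc_of_le hpq]
  exact g_contOn θ (fun x hx => ⟨lt_of_lt_of_le hp hx.1, le_trans hx.2 hq⟩)

lemma aux_intble (c : ℝ) {p q : ℝ} (hp : 0 < p) (hpq : p ≤ q) :
    IntervalIntegrable (fun y : ℝ => c * y ^ (-2 : ℝ)) MeasureTheory.volume p q := by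
  apply ContinuousOn.intervalIntegrable
  apply ContinuousOn.mul continuousOn_const
  apply ContinuousOn.rpow_const continuousOn_id
  intro x hx
  rw [uIcc_of_le hpq] at hx
  exact Or.inl (ne_of_gt (lt_of_lt_of_le hp hx.1))

lemma integral_aux (c : ℝ) {p q : ℝ} (hp : 0 < p) (hpq : p ≤ q) :
    ∫ y in p..q, c * y ^ (-2 : ℝ) = c * (p⁻¹ - q⁻¹) := by
  rw [intervalIntegral.integral_const_mul]
  have h0 : (0 : ℝ) ∉ Set.uIcc p q := by
    rw [Set.uIcc_of_le hpq]
    intro h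
    exact absurd h.1 (not_le.mpr hp)
  rw [integral_rpow (Or.inr ⟨by norm_num, h0⟩)]
  have h1 : (-2 : ℝ) + 1 = -1 := by norm_num
  rw [h1, Real.rpow_neg_one, Real.rpow_neg_one]
  ring

lemma upper_piece (θ : ℝ) (hθ : 0 < θ) {p q : ℝ} (hp : 0 < p) (hpq : p ≤ q) (hq : q ≤ 1) :
    ∫ y in p..q, g θ y ≤ (1 - Real.log q) ^ (-θ) * (p⁻¹ - q⁻¹) := by
  rw [← integral_aux ((1 - Real.log q) ^ (-θ)) hp hpq]
  apply intervalIntegral.integral_mono_on hpq (g_intble θ hp hpq hq) (aux_intble _ hp hpq)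
  intro y hy
  have hy0 : 0 < y := lt_of_lt_of_le hp hy.1
  have hq0 : 0 < 1 - Real.log q := by
    have : Real.log q ≤ 0 := Real.log_nonpos (lt_of_lt_of_le hp hpq).le hq
    linarith
  have hlog : 1 - Real.log q ≤ 1 - Real.log y := by
    have := Real.log_le_log hy0 hy.2
    linarith
  unfold g
  apply mul_le_mul_of_nonneg_right _ (Real.rpow_nonneg hy0.le _)
  exact Real.rpow_le_rpow_of_nonpos hq0 hlog (neg_nonpos.mpr hθ.le)

lemma lower_piece (θ : ℝ) (hθ : 0 < θ) {p : ℝ} (hp : 0 < p) (hp1 : p ≤ 1) :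
    (1 - Real.log p) ^ (-θ) * (p⁻¹ - 1⁻¹) ≤ ∫ y in p..1, g θ y := by
  rw [← integral_aux ((1 - Real.log p) ^ (-θ)) hp hp1]
  apply intervalIntegral.integral_mono_on hp1 (aux_intble _ hp hp1) (g_intble θ hp hp1 le_rfl)
  intro y hy
  have hy0 : 0 < y := lt_of_lt_of_le hp hy.1
  have hy1 : 0 < 1 - Real.log y := by
    have : Real.log y ≤ 0 := Real.log_nonpos hy0.le hy.2
    linarith
  have hlog : 1 - Real.log y ≤ 1 - Real.log p := by
    have := Real.log_le_log hp hy.1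
    linarith
  unfold g
  apply mul_le_mul_of_nonneg_right _ (Real.rpow_nonneg hy0.le _)
  exact Real.rpow_le_rpow_of_nonpos hy1 hlog (neg_nonpos.mpr hθ.le)

end Stmt9Aux

open Stmt9Aux in
theorem stmt9 (θ : ℝ) (hθ : 0 < θ) (hθ' : θ < 1) :
    Tendsto (fun z : ℝ =>
        (∫ y in z..1, (1 - Real.log y) ^ (-θ) * y ^ (-2 : ℝ)) /
          (z⁻¹ * (1 - Real.log z) ^ (-θ)))
      (nhdsWithin 0 (Ioi 0)) (nhds 1) := by
  -- the good set of z
  have hz_pos : ∀ᶠ z : ℝ in nhdsWithin 0 (Ioi 0), 0 < z :=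
    eventually_mem_nhdsWithin
  have hz_lt1 : ∀ᶠ z : ℝ in nhdsWithin 0 (Ioi 0), z < 1 :=
    eventually_nhdsWithin_of_eventually_nhds (Filter.Tendsto.eventually_lt_const one_pos tendsto_id)
  have ha_tendsto : Tendsto (fun z : ℝ => z * (1 - Real.log z))
      (nhdsWithin 0 (Ioi 0)) (nhds 0) := by
    have h1 : Tendsto (fun z : ℝ => Real.log z * z ^ (1 : ℝ))
        (nhdsWithin 0 (Ioi 0)) (nhds 0) := tendsto_log_mul_rpow_nhdsGT_zero one_pos
    have h2 : Tendsto (fun z : ℝ => z) (nhdsWithin 0 (Ioi 0)) (nhds 0) :=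
      tendsto_id.mono_left nhdsWithin_le_nhds
    have := h2.sub h1
    rw [sub_zero] at this
    apply this.congr
    intro z
    rw [Real.rpow_one]
    ring
  have ha_lt1 : ∀ᶠ z : ℝ in nhdsWithin 0 (Ioi 0), z * (1 - Real.log z) < 1 :=
    ha_tendsto.eventually (Filter.Tendsto.eventually_lt_const one_pos tendsto_id)
  -- the lower bound function tends to 1
  have hlow : Tendsto (fun z : ℝ => 1 - z) (nhdsWithin 0 (Ioi 0)) (nhds 1) := by
    have : Tendsto (fun z : ℝ => 1 - z) (nhds (0:ℝ)) (nhds (1 - 0)) :=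
      (continuous_const.sub continuous_id).tendsto 0
    rw [sub_zero] at this
    exact this.mono_left nhdsWithin_le_nhds
  -- 1 - log z → ∞
  have hP_top : Tendsto (fun z : ℝ => 1 - Real.log z) (nhdsWithin 0 (Ioi 0)) atTop := by
    apply Filter.tendsto_atTop_add_const_left _ 1
    exact tendsto_neg_atBot_atTop.comp Real.tendsto_log_nhdsGT_zero
  -- the upper bound function tends to 1
  have hup1 : Tendsto (fun x : ℝ => (x / (x - Real.log x)) ^ θ) atTop (nhds 1) := by
    have h0 : Tendsto (fun x : ℝ => Real.log x / x) atTop (nhds 0) :=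
      Real.isLittleO_log_id_atTop.tendsto_div_nhds_zero
    have h1 : Tendsto (fun x : ℝ => ((1 : ℝ) - Real.log x / x)⁻¹) atTop (nhds 1) := by
      have := ((tendsto_const_nhds (x := (1:ℝ))).sub h0).inv₀ (by norm_num)
      simpa using this
    have h2 : Tendsto (fun x : ℝ => x / (x - Real.log x)) atTop (nhds 1) := by
      apply h1.congr'
      filter_upwards [eventually_gt_atTop (0 : ℝ)] with x hx
      rw [one_sub_div hx.ne', inv_div]
    have := h2.rpow_const (Or.inr hθ.le)
    rwa [Real.one_rpow] at this
  have hup : Tendsto (fun z : ℝ =>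
      ((1 - Real.log z) / ((1 - Real.log z) - Real.log (1 - Real.log z))) ^ θ
        + (1 - Real.log z) ^ (θ - 1)) (nhdsWithin 0 (Ioi 0)) (nhds 1) := by
    have h1 := hup1.comp hP_top
    have h2 : Tendsto (fun z : ℝ => (1 - Real.log z) ^ (θ - 1))
        (nhdsWithin 0 (Ioi 0)) (nhds 0) := by
      have := (tendsto_rpow_neg_atTop (by linarith : (0:ℝ) < 1 - θ)).comp hP_top
      apply this.congr
      intro z
      simp [Function.comp, neg_sub]
    have := h1.add h2
    rw [add_zero] at this
    exact this
  apply tendsto_of_tendsto_of_tendsto_of_le_of_le' hlow hup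
  · -- lower bound
    filter_upwards [hz_pos, hz_lt1] with z hz0 hz1
    have hP0 : (0:ℝ) < 1 - Real.log z := by
      have : Real.log z ≤ 0 := Real.log_nonpos hz0.le hz1.le
      linarith
    have hPθ : (0:ℝ) < (1 - Real.log z) ^ (-θ) := Real.rpow_pos_of_pos hP0 _
    have hD : (0:ℝ) < z⁻¹ * (1 - Real.log z) ^ (-θ) :=
      mul_pos (inv_pos.mpr hz0) hPθ
    rw [le_div_iff₀ hD]
    calc (1 - z) * (z⁻¹ * (1 - Real.log z) ^ (-θ))
        = (1 - Real.log z) ^ (-θ) * (z⁻¹ - 1⁻¹) := by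
          field_simp
      _ ≤ ∫ y in z..1, g θ y := lower_piece θ hθ hz0 hz1.le
      _ = ∫ y in z..1, (1 - Real.log y) ^ (-θ) * y ^ (-2:ℝ) := rfl
  · -- upper bound
    filter_upwards [hz_pos, hz_lt1, ha_lt1] with z hz0 hz1 ha1
    set P := 1 - Real.log z with hPdef
    have hP1 : (1:ℝ) < P := by
      have : Real.log z < 0 := Real.log_neg hz0 hz1
      simp only [hPdef]
      linarith
    have hP0 : (0:ℝ) < P := by linarith
    set a := z * P with hadef
    have ha0 : 0 < a := mul_pos hz0 hP0
    have hza : z ≤ a := by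
      nlinarith
    have hQ : 1 - Real.log a = P - Real.log P := by
      rw [hadef, Real.log_mul hz0.ne' hP0.ne', hPdef]
      ring
    have hlogP : Real.log P < P := by
      have := Real.log_le_sub_one_of_pos hP0
      linarith
    have hQ0 : (0:ℝ) < 1 - Real.log a := by rw [hQ]; linarith
    have hPθ : (0:ℝ) < P ^ (-θ) := Real.rpow_pos_of_pos hP0 _
    have hD : (0:ℝ) < z⁻¹ * P ^ (-θ) := mul_pos (inv_pos.mpr hz0) hPθ
    -- split the integral
    have hsplit : (∫ y in z..1, g θ y)
        = (∫ y in z..a, g θ y) + ∫ y in a..1, g θ y :=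
      (intervalIntegral.integral_add_adjacent_intervals
        (g_intble θ hz0 hza ha1.le) (g_intble θ ha0 ha1.le le_rfl)).symm
    have hI1 : (∫ y in z..a, g θ y) ≤ (1 - Real.log a) ^ (-θ) * z⁻¹ := by
      calc (∫ y in z..a, g θ y) ≤ (1 - Real.log a) ^ (-θ) * (z⁻¹ - a⁻¹) :=
            upper_piece θ hθ hz0 hza ha1.le
        _ ≤ (1 - Real.log a) ^ (-θ) * z⁻¹ := by
            apply mul_le_mul_of_nonneg_left _ (Real.rpow_nonneg hQ0.le _)
            have : 0 < a⁻¹ := inv_pos.mpr ha0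
            linarith
    have hI2 : (∫ y in a..1, g θ y) ≤ a⁻¹ := by
      calc (∫ y in a..1, g θ y) ≤ (1 - Real.log 1) ^ (-θ) * (a⁻¹ - 1⁻¹) :=
            upper_piece θ hθ ha0 ha1.le le_rfl
        _ ≤ a⁻¹ := by
            rw [Real.log_one, sub_zero, Real.one_rpow, one_mul]
            have : 0 < a⁻¹ := inv_pos.mpr ha0
            linarith
    have hF : (∫ y in z..1, g θ y) ≤ (1 - Real.log a) ^ (-θ) * z⁻¹ + a⁻¹ := by
      rw [hsplit]; exact add_le_add hI1 hI2
    -- now divide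
    show (∫ y in z..1, (1 - Real.log y) ^ (-θ) * y ^ (-2:ℝ)) / (z⁻¹ * P ^ (-θ))
        ≤ (P / (P - Real.log P)) ^ θ + P ^ (θ - 1)
    rw [div_le_iff₀ hD]
    refine le_trans hF (le_of_eq ?_)
    have hQP : P - Real.log P > 0 := by linarith
    have e1 : (1 - Real.log a) ^ (-θ) = ((P - Real.log P) ^ θ)⁻¹ := by
      rw [hQ, Real.rpow_neg hQP.le]
    have e2 : P ^ (-θ) = (P ^ θ)⁻¹ := Real.rpow_neg hP0.le _
    have e3 : (P / (P - Real.log P)) ^ θ = P ^ θ / (P - Real.log P) ^ θ :=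
      Real.div_rpow hP0.le hQP.le _
    have e4 : P ^ (θ - 1) = P ^ θ / P := by
      rw [Real.rpow_sub hP0, Real.rpow_one]
    have hPθpos : (0:ℝ) < P ^ θ := Real.rpow_pos_of_pos hP0 _
    have hQθpos : (0:ℝ) < (P - Real.log P) ^ θ := Real.rpow_pos_of_pos hQP _
    rw [e1, e2, e3, e4, hadef]
    field_simp
end

section
/- Let μ, α, χ, ε > 0 with α ≥ 1 and ε = (2μ+1-α-χ)/4 > 0, and let m ≥ m₀ where m₀ ≥ 2 satisfies m₀ α ≥ μ + 1 + χ and max{χ(μ+α)/(m₀α-μ), μ(μ+1)/(m₀α)} ≤ ε. Then (mα-μ)(mα-μ-1)/(m(m-1)α²) ≤ 1 - (2μ+1-α-ε)/((m-1)α) for all m ≥ m₀. -/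
theorem stmt16 (μ α χ ε m₀ m : ℝ)
    (hμ : 0 < μ) (hα : 1 ≤ α) (hχ : 0 < χ)
    (hε : ε = (2 * μ + 1 - α - χ) / 4) (hε' : 0 < ε)
    (hm₀ : 2 ≤ m₀)
    (hm₀α : μ + 1 + χ ≤ m₀ * α)
    (hm₀ε : max (χ * (μ + α) / (m₀ * α - μ)) (μ * (μ + 1) / (m₀ * α)) ≤ ε)
    (hm : m₀ ≤ m) :
    (m * α - μ) * (m * α - μ - 1) / (m * (m - 1) * α ^ 2)
      ≤ 1 - (2 * μ + 1 - α - ε) / ((m - 1) * α) := by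
  have hα0 : (0:ℝ) < α := by linarith
  have hm1 : (1:ℝ) < m := by linarith
  have hm0pos : (0:ℝ) < m₀ * α := by nlinarith
  have h2 : μ * (μ + 1) / (m₀ * α) ≤ ε := le_trans (le_max_right _ _) hm₀ε
  have key : μ * (μ + 1) ≤ ε * (m * α) := by
    have h3 : μ * (μ + 1) ≤ ε * (m₀ * α) := by
      rw [div_le_iff₀ hm0pos] at h2; linarith
    have h4 : m₀ * α ≤ m * α := by nlinarith
    nlinarith [mul_le_mul_of_nonneg_left h4 hε'.le]
  have hden : 0 < m * (m - 1) * α ^ 2 := by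
    apply mul_pos (mul_pos (by linarith) (by linarith))
    positivity
  rw [div_le_iff₀ hden]
  have e : (1 - (2 * μ + 1 - α - ε) / ((m - 1) * α)) * (m * (m - 1) * α ^ 2)
      = m * (m - 1) * α ^ 2 - (2 * μ + 1 - α - ε) * (m * α) := by
    have hne : (m - 1) * α ≠ 0 := ne_of_gt (mul_pos (by linarith) hα0)
    have hne' : m - 1 ≠ 0 := by linarith
    field_simp
  rw [e]
  nlinarith [key]
end
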